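/- arXiv:1504.01357 — 2 statements merged into one kernel-verified Lean document; each statement's English description precedes it below -/
import Mathlib

section
/- Let X be a complex Banach space, f : ℕ₀ → X a finitely supported sequence and α > 0. Then W^α(W^{-α} f) = f and W^{-α}(W^α f) = f. -/
/-- The Cesàro kernel `k^α(n) = Γ(n+α)/(Γ(α)·Γ(n+1))`. -/
noncomputable def cesK (α : ℝ) (n : ℕ) : ℝ :=
  Real.Gamma ((n : ℝ) + α) / (Real.Gamma α * Real.Gamma ((n : ℝ) + 1))

/-- The Weyl sum of order `α`: `W^{-α}f(n) = ∑_{j=n}^∞ k^α(j-n)·f(j)`. -/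
noncomputable def weylSum {X : Type*} [AddCommMonoid X] [Module ℝ X] (α : ℝ) (f : ℕ → X) :
    ℕ → X :=
  fun n => ∑ᶠ j : ℕ, cesK α j • f (j + n)

/-- The forward difference operator `Δh(n) = h(n+1) - h(n)`. -/
def fdiff {X : Type*} [AddCommGroup X] (f : ℕ → X) : ℕ → X := fun n => f (n + 1) - f n

/-- The Weyl difference of order `α > 0`:
`W^α f(n) = (-1)^m Δ^m W^{-(m-α)} f(n)` with `m = [α]+1`; and `W^0 f = f`. -/
noncomputable def weylDiff {X : Type*} [AddCommGroup X] [Module ℝ X] (α : ℝ) (f : ℕ → X) :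
    ℕ → X :=
  if α = 0 then f
  else ((-1 : ℝ) ^ (⌊α⌋₊ + 1)) • fdiff^[⌊α⌋₊ + 1] (weylSum ((⌊α⌋₊ : ℝ) + 1 - α) f)

section Aux
open Finset

lemma cesK_zero {α : ℝ} (hα : 0 < α) : cesK α 0 = 1 := by
  simp only [cesK, Nat.cast_zero, zero_add, Real.Gamma_one, mul_one]
  exact div_self (Real.Gamma_pos_of_pos hα).ne'

lemma gamma_nat_ne (n : ℕ) : Real.Gamma ((n:ℝ) + 1) ≠ 0 :=
  (Real.Gamma_pos_of_pos (by positivity)).ne'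

lemma cesK_one (n : ℕ) : cesK 1 n = 1 := by
  simp only [cesK, Real.Gamma_one, one_mul]
  exact div_self (gamma_nat_ne n)

lemma cesK_step {β : ℝ} (hβ : 1 < β) (n : ℕ) :
    cesK β (n + 1) - cesK β n = cesK (β - 1) (n + 1) := by
  have h0 : ((n:ℝ) + β) ≠ 0 := by positivity
  have h1 : Real.Gamma ((↑(n+1):ℝ) + β) = ((n:ℝ) + β) * Real.Gamma ((n:ℝ) + β) := by
    push_cast
    rw [show (n:ℝ) + 1 + β = ((n:ℝ) + β) + 1 by ring, Real.Gamma_add_one h0]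
  have h2 : Real.Gamma ((↑(n+1):ℝ) + 1) = ((n:ℝ) + 1) * Real.Gamma ((n:ℝ) + 1) := by
    push_cast
    rw [show (n:ℝ) + 1 + 1 = ((n:ℝ) + 1) + 1 by ring, Real.Gamma_add_one (by positivity)]
  have h3 : Real.Gamma β = (β - 1) * Real.Gamma (β - 1) := by
    rw [show β = (β - 1) + 1 by ring, Real.Gamma_add_one (by intro h; linarith)]
    ring_nf
  have h4 : Real.Gamma (β - 1) ≠ 0 := (Real.Gamma_pos_of_pos (by linarith)).ne'
  have h5 : Real.Gamma ((n:ℝ) + 1) ≠ 0 := gamma_nat_ne n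
  have h6 : (↑(n+1):ℝ) + (β - 1) = (n:ℝ) + β := by push_cast; ring
  have hb : (β - 1) ≠ 0 := by intro h; linarith
  have hn : ((n:ℝ) + 1) ≠ 0 := by positivity
  rw [cesK, cesK, cesK, h1, h2, h3, h6]
  field_simp
  ring

lemma cesK_rec {δ : ℝ} (hδ : 0 < δ) (n : ℕ) :
    ((n:ℝ) + 1) * cesK δ (n + 1) = ((n:ℝ) + δ) * cesK δ n := by
  have h0 : ((n:ℝ) + δ) ≠ 0 := by positivity
  have h1 : Real.Gamma ((↑(n+1):ℝ) + δ) = ((n:ℝ) + δ) * Real.Gamma ((n:ℝ) + δ) := by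
    push_cast
    rw [show (n:ℝ) + 1 + δ = ((n:ℝ) + δ) + 1 by ring, Real.Gamma_add_one h0]
  have h2 : Real.Gamma ((↑(n+1):ℝ) + 1) = ((n:ℝ) + 1) * Real.Gamma ((n:ℝ) + 1) := by
    push_cast
    rw [show (n:ℝ) + 1 + 1 = ((n:ℝ) + 1) + 1 by ring, Real.Gamma_add_one (by positivity)]
  have hn : ((n:ℝ) + 1) ≠ 0 := by positivity
  have hgd : Real.Gamma δ ≠ 0 := (Real.Gamma_pos_of_pos hδ).ne'
  have h5 : Real.Gamma ((n:ℝ) + 1) ≠ 0 := gamma_nat_ne n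
  rw [cesK, cesK, h1, h2]
  field_simp

lemma cesK_conv {β γ : ℝ} (hβ : 0 < β) (hγ : 0 < γ) (n : ℕ) :
    ∑ i ∈ range (n + 1), cesK β i * cesK γ (n - i) = cesK (β + γ) n := by
  induction n with
  | zero => simp [cesK_zero hβ, cesK_zero hγ, cesK_zero (by positivity : (0:ℝ) < β + γ)]
  | succ n ih =>
    set C : ℝ := ∑ i ∈ range (n + 2), cesK β i * cesK γ (n + 1 - i) with hC
    have key : ((n:ℝ) + 1) * C = ((n:ℝ) + (β + γ)) * cesK (β + γ) n := by
      have hsplit : ((n:ℝ) + 1) * C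
          = (∑ i ∈ range (n + 2), (i:ℝ) * (cesK β i * cesK γ (n + 1 - i)))
          + (∑ i ∈ range (n + 2), (((n:ℝ) + 1) - (i:ℝ)) * (cesK β i * cesK γ (n + 1 - i))) := by
        rw [hC, mul_sum, ← sum_add_distrib]
        exact sum_congr rfl fun i _ => by ring
      have hg : (∑ i ∈ range (n + 2), (i:ℝ) * (cesK β i * cesK γ (n + 1 - i)))
          = ∑ i ∈ range (n + 1), ((i:ℝ) + β) * (cesK β i * cesK γ (n - i)) := by
        rw [sum_range_succ' (fun i => (i:ℝ) * (cesK β i * cesK γ (n + 1 - i))) (n + 1)]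
        simp only [Nat.cast_zero, zero_mul, add_zero]
        refine sum_congr rfl fun i hi => ?_
        have h1 : n + 1 - (i + 1) = n - i := by omega
        rw [h1]
        push_cast
        rw [show ((i:ℝ) + 1) * (cesK β (i + 1) * cesK γ (n - i))
            = (((i:ℝ) + 1) * cesK β (i + 1)) * cesK γ (n - i) by ring, cesK_rec hβ i]
        ring
      have hh : (∑ i ∈ range (n + 2), (((n:ℝ) + 1) - (i:ℝ)) * (cesK β i * cesK γ (n + 1 - i)))
          = ∑ i ∈ range (n + 1), (((n:ℝ) - (i:ℝ)) + γ) * (cesK β i * cesK γ (n - i)) := by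
        rw [sum_range_succ]
        simp only [Nat.cast_add, Nat.cast_one, sub_self, zero_mul, add_zero]
        refine sum_congr rfl fun i hi => ?_
        have hin : i ≤ n := Nat.lt_succ_iff.mp (mem_range.mp hi)
        have h1 : n + 1 - i = (n - i) + 1 := by omega
        have h2 : ((n:ℝ) + 1) - (i:ℝ) = ((n - i : ℕ) : ℝ) + 1 := by
          rw [Nat.cast_sub hin]; ring
        rw [h1, h2]
        rw [show (((n - i:ℕ):ℝ) + 1) * (cesK β i * cesK γ ((n - i) + 1))
            = ((((n - i:ℕ):ℝ) + 1) * cesK γ ((n - i) + 1)) * cesK β i by ring, cesK_rec hγ (n - i)]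
        rw [Nat.cast_sub hin]
        ring
      rw [hsplit, hg, hh, ← sum_add_distrib]
      rw [show (∑ i ∈ range (n + 1), (((i:ℝ) + β) * (cesK β i * cesK γ (n - i))
          + (((n:ℝ) - (i:ℝ)) + γ) * (cesK β i * cesK γ (n - i))))
          = ((n:ℝ) + (β + γ)) * ∑ i ∈ range (n + 1), cesK β i * cesK γ (n - i) by
        rw [mul_sum]; exact sum_congr rfl fun i _ => by ring]
      rw [ih]
    have hrec := cesK_rec (show (0:ℝ) < β + γ by positivity) n
    have hn1 : ((n:ℝ) + 1) ≠ 0 := by positivity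
    have : ((n:ℝ) + 1) * C = ((n:ℝ) + 1) * cesK (β + γ) (n + 1) := by
      rw [key, hrec]
    exact mul_left_cancel₀ hn1 this

def Supbd {X : Type*} [Zero X] (f : ℕ → X) (N : ℕ) : Prop := ∀ j, N ≤ j → f j = 0

variable {X : Type*} [AddCommGroup X] [Module ℝ X]

lemma weylSum_eq_sum (α : ℝ) {f : ℕ → X} {N : ℕ} (hf : Supbd f N) {M : ℕ} (hNM : N ≤ M)
    (n : ℕ) : weylSum α f n = ∑ j ∈ range M, cesK α j • f (j + n) := by
  apply finsum_eq_finset_sum_of_support_subset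
  intro j hj
  simp only [Function.mem_support] at hj
  simp only [coe_range, Set.mem_Iio]
  by_contra h
  push_neg at h
  exact hj (by rw [hf (j + n) (by omega)]; simp)

lemma supbd_weylSum (α : ℝ) {f : ℕ → X} {N : ℕ} (hf : Supbd f N) :
    Supbd (weylSum α f) N := by
  intro n hn
  apply finsum_eq_zero_of_forall_eq_zero
  intro j
  rw [hf (j + n) (by omega)]; simp

lemma supbd_fdiff {f : ℕ → X} {N : ℕ} (hf : Supbd f N) : Supbd (fdiff f) N := by
  intro n hn
  simp [fdiff, hf n hn, hf (n + 1) (by omega)]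

lemma weylSum_sub {β : ℝ} (hβ : 0 < β) {f : ℕ → X} {N : ℕ} (hf : Supbd f N) (n : ℕ) :
    weylSum β f n - weylSum β f (n + 1)
      = f n + ∑ j ∈ range N, (cesK β (j + 1) - cesK β j) • f (j + 1 + n) := by
  rw [weylSum_eq_sum β hf (Nat.le_succ N) n, weylSum_eq_sum β hf le_rfl (n + 1),
    sum_range_succ' (fun j => cesK β j • f (j + n)) N]
  simp only [Nat.cast_zero, cesK_zero hβ, one_smul, zero_add]
  have : ∑ j ∈ range N, cesK β j • f (j + (n + 1)) = ∑ j ∈ range N, cesK β j • f (j + 1 + n) :=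
    sum_congr rfl fun j _ => by rw [show j + (n + 1) = j + 1 + n by omega]
  rw [this]
  rw [show ∑ j ∈ range N, (cesK β (j + 1) - cesK β j) • f (j + 1 + n)
      = (∑ j ∈ range N, cesK β (j + 1) • f (j + 1 + n))
        - ∑ j ∈ range N, cesK β j • f (j + 1 + n) by
    rw [← sum_sub_distrib]; exact sum_congr rfl fun j _ => sub_smul _ _ _]
  abel

lemma fdiff_weylSum_one {f : ℕ → X} {N : ℕ} (hf : Supbd f N) (n : ℕ) :
    fdiff (weylSum 1 f) n = - f n := by
  have h := weylSum_sub one_pos hf n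
  simp only [cesK_one, sub_self, zero_smul, sum_const_zero, add_zero] at h
  simp [fdiff, ← h]

lemma fdiff_weylSum {β : ℝ} (hβ : 1 < β) {f : ℕ → X} {N : ℕ} (hf : Supbd f N) (n : ℕ) :
    fdiff (weylSum β f) n = - weylSum (β - 1) f n := by
  have h := weylSum_sub (by linarith) hf n
  have h2 : weylSum (β - 1) f n
      = f n + ∑ j ∈ range N, (cesK β (j + 1) - cesK β j) • f (j + 1 + n) := by
    rw [weylSum_eq_sum (β - 1) hf (Nat.le_succ N) n,
      sum_range_succ' (fun j => cesK (β - 1) j • f (j + n)) N]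
    simp only [Nat.cast_zero, cesK_zero (by linarith : (0:ℝ) < β - 1), one_smul, zero_add]
    rw [add_comm]
    congr 1
    exact sum_congr rfl fun j _ => by rw [cesK_step hβ j]
  simp [fdiff, ← h, h2]

lemma fdiff_iterate_neg (k : ℕ) (g : ℕ → X) : fdiff^[k] (-g) = - fdiff^[k] g := by
  induction k generalizing g with
  | zero => simp
  | succ k ih =>
    rw [Function.iterate_succ_apply, Function.iterate_succ_apply,
      show fdiff (-g) = -fdiff g from funext fun n => by simp [fdiff]; abel, ih (fdiff g)]

lemma fdiff_iter_weylSum {f : ℕ → X} {N : ℕ} (hf : Supbd f N) (m : ℕ) :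
    fdiff^[m + 1] (weylSum ((m : ℝ) + 1) f) = ((-1 : ℝ) ^ (m + 1)) • f := by
  induction m with
  | zero =>
    funext n
    simp only [Nat.cast_zero, zero_add, Function.iterate_one]
    rw [fdiff_weylSum_one hf n]
    simp
  | succ m ih =>
    rw [Function.iterate_succ_apply]
    have hstep : fdiff (weylSum ((↑(m + 1) : ℝ) + 1) f) = - weylSum ((m : ℝ) + 1) f := by
      funext n
      rw [fdiff_weylSum (by push_cast; linarith : (1:ℝ) < (↑(m + 1) : ℝ) + 1) hf n]
      norm_num
    rw [hstep, fdiff_iterate_neg, ih]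
    funext n
    simp [pow_succ]

lemma weylSum_semigroup {β γ : ℝ} (hβ : 0 < β) (hγ : 0 < γ) {f : ℕ → X} {N : ℕ}
    (hf : Supbd f N) : weylSum β (weylSum γ f) = weylSum (β + γ) f := by
  funext n
  rw [weylSum_eq_sum β (supbd_weylSum γ hf) le_rfl n, weylSum_eq_sum (β + γ) hf le_rfl n]
  have hL : ∑ j ∈ range N, cesK β j • weylSum γ f (j + n)
      = ∑ p ∈ range N ×ˢ range N, (cesK β p.1 * cesK γ p.2) • f (p.2 + p.1 + n) := by
    rw [sum_product]
    refine sum_congr rfl fun j _ => ?_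
    rw [weylSum_eq_sum γ hf le_rfl (j + n), smul_sum]
    exact sum_congr rfl fun i _ => by rw [smul_smul, show i + (j + n) = i + j + n by omega]
  have hR : ∑ s ∈ range N, cesK (β + γ) s • f (s + n)
      = ∑ p ∈ (range N).sigma (fun s => range (s + 1)),
          (cesK β p.2 * cesK γ (p.1 - p.2)) • f (p.1 + n) := by
    rw [sum_sigma]
    refine sum_congr rfl fun s _ => ?_
    rw [← cesK_conv hβ hγ s, sum_smul]
  rw [hL, hR]
  rw [show (∑ p ∈ range N ×ˢ range N, (cesK β p.1 * cesK γ p.2) • f (p.2 + p.1 + n))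
      = ∑ p ∈ (range N ×ˢ range N).filter (fun p => p.1 + p.2 < N),
          (cesK β p.1 * cesK γ p.2) • f (p.2 + p.1 + n) by
    symm
    apply sum_subset (filter_subset _ _)
    intro p hp hnp
    simp only [mem_filter, hp, true_and, not_lt] at hnp
    rw [hf (p.2 + p.1 + n) (by omega), smul_zero]]
  apply sum_nbij' (fun p => ⟨p.1 + p.2, p.1⟩)
    (fun q => (q.2, q.1 - q.2))
  · intro p hp
    simp only [mem_filter, mem_product, mem_range] at hp
    simp only [mem_sigma, mem_range]
    omega
  · intro q hq
    simp only [mem_sigma, mem_range] at hq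
    simp only [mem_filter, mem_product, mem_range]
    omega
  · intro p hp
    simp only [mem_filter, mem_product, mem_range] at hp
    simp only [Nat.add_sub_cancel_left]
  · rintro ⟨s, i⟩ hq
    simp only [mem_sigma, mem_range] at hq
    have h : i + (s - i) = s := by omega
    simp [h]
  · intro p hp
    simp only [Nat.add_sub_cancel_left]
    rw [show p.1 + p.2 + n = p.2 + p.1 + n by omega]

lemma supbd_fdiff_iter (k : ℕ) {h : ℕ → X} {N : ℕ} (hh : Supbd h N) :
    Supbd (fdiff^[k] h) N := by
  induction k generalizing h with
  | zero => simpa using hh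
  | succ k ih => rw [Function.iterate_succ_apply]; exact ih (supbd_fdiff hh)

lemma weylSum_fdiff (α : ℝ) {h : ℕ → X} {N : ℕ} (hh : Supbd h N) :
    weylSum α (fdiff h) = fdiff (weylSum α h) := by
  funext n
  rw [show fdiff (weylSum α h) n = weylSum α h (n + 1) - weylSum α h n from rfl,
    weylSum_eq_sum α (supbd_fdiff hh) le_rfl n,
    weylSum_eq_sum α hh le_rfl (n + 1), weylSum_eq_sum α hh le_rfl n, ← sum_sub_distrib]
  refine sum_congr rfl fun j _ => ?_
  rw [show fdiff h (j + n) = h (j + n + 1) - h (j + n) from rfl, smul_sub,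
    show j + (n + 1) = j + n + 1 by omega]

lemma weylSum_fdiff_iter (α : ℝ) (k : ℕ) {h : ℕ → X} {N : ℕ} (hh : Supbd h N) :
    weylSum α (fdiff^[k] h) = fdiff^[k] (weylSum α h) := by
  induction k generalizing h with
  | zero => simp
  | succ k ih =>
    rw [Function.iterate_succ_apply, Function.iterate_succ_apply, ih (supbd_fdiff hh),
      weylSum_fdiff α hh]

lemma weylSum_smul (α : ℝ) (c : ℝ) {h : ℕ → X} {N : ℕ} (hh : Supbd h N) :
    weylSum α (c • h) = c • weylSum α h := by
  funext n
  have hch : Supbd (c • h) N := fun j hj => by simp [Pi.smul_apply, hh j hj]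
  rw [Pi.smul_apply, weylSum_eq_sum α hch le_rfl n, weylSum_eq_sum α hh le_rfl n, smul_sum]
  exact sum_congr rfl fun j _ => by rw [Pi.smul_apply, smul_comm]

end Aux

open Finset in
theorem stmt3 {X : Type*} [NormedAddCommGroup X] [NormedSpace ℂ X] [CompleteSpace X]
    (f : ℕ → X) (hf : (Function.support f).Finite) (α : ℝ) (hα : 0 < α) :
    weylDiff α (weylSum α f) = f ∧ weylSum α (weylDiff α f) = f := by
  obtain ⟨N, hN⟩ := hf.bddAbove
  have hfN : Supbd f (N + 1) := by
    intro j hj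
    by_contra h
    exact absurd (hN (Function.mem_support.mpr h)) (by omega)
  have hα0 : α ≠ 0 := hα.ne'
  set m : ℕ := ⌊α⌋₊ + 1 with hm
  set b : ℝ := (⌊α⌋₊ : ℝ) + 1 - α with hbdef
  have hb : 0 < b := by
    have := Nat.lt_floor_add_one α
    simp only [hbdef]; linarith
  have hcast : ((⌊α⌋₊ : ℝ) + 1) = ((⌊α⌋₊ : ℕ) : ℝ) + 1 := by norm_num
  have hpow : ((-1 : ℝ) ^ m) * ((-1 : ℝ) ^ m) = 1 := by
    rw [← pow_add]; exact Even.neg_one_pow ⟨m, rfl⟩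
  constructor
  · rw [weylDiff, if_neg hα0]
    have h1 : weylSum b (weylSum α f) = weylSum (b + α) f :=
      weylSum_semigroup hb hα hfN
    have h2 : b + α = (⌊α⌋₊ : ℝ) + 1 := by simp [hbdef]
    rw [h1, h2, fdiff_iter_weylSum hfN ⌊α⌋₊, smul_smul, hpow, one_smul]
  · rw [weylDiff, if_neg hα0]
    have hb1 : Supbd (weylSum b f) (N + 1) := supbd_weylSum b hfN
    rw [weylSum_smul α _ (supbd_fdiff_iter m hb1), weylSum_fdiff_iter α m hb1,
      weylSum_semigroup hα hb hfN]
    have h2 : α + b = (⌊α⌋₊ : ℝ) + 1 := by simp [hbdef]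
    rw [h2, fdiff_iter_weylSum hfN ⌊α⌋₊, smul_smul, hpow, one_smul]
end

section
/- Let f, g : ℕ₀ → ℂ be finitely supported sequences and α ≥ 0. Then for every n ∈ ℕ₀: W^α(f*g)(n) = ∑_{j=0}^n W^α g(j)·∑_{p=n-j}^n k^α(p-n+j)·W^α f(p) − ∑_{j=n+1}^∞ W^α g(j)·∑_{p=n+1}^∞ k^α(p-n+j)·W^α f(p), where all series are finite sums since W^α f and W^α g are finitely supported. -/
/-- The Cesàro kernel extended to `α = 0` by `k^0(n) = δ_{0,n}`. -/
noncomputable def cesK0 (α : ℝ) (n : ℕ) : ℝ :=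
  if α = 0 then (if n = 0 then 1 else 0) else cesK α n

/-- Convolution of sequences: `(f*g)(n) = ∑_{j=0}^n f(n-j)·g(j)`. -/
noncomputable def conv (f g : ℕ → ℂ) (n : ℕ) : ℂ := ∑ j ∈ Finset.range (n + 1), f (n - j) * g j

open Finset

lemma cesK_succ {α : ℝ} (hα : 0 < α) (n : ℕ) :
    ((n:ℝ) + 1) * cesK α (n+1) = α * cesK (α+1) n := by
  have h1 : ((n+1:ℕ):ℝ) + α = ((n:ℝ) + α) + 1 := by push_cast; ring
  have h2 : ((n+1:ℕ):ℝ) + 1 = ((n:ℝ) + 1) + 1 := by push_cast; ring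
  have hna : (n:ℝ) + α ≠ 0 := by positivity
  have hn1 : (n:ℝ) + 1 ≠ 0 := by positivity
  have h3 : (n:ℝ) + (α+1) = ((n:ℝ)+α)+1 := by ring
  rw [cesK, cesK, h1, h2, Real.Gamma_add_one hna, Real.Gamma_add_one hn1,
    Real.Gamma_add_one hα.ne', h3, Real.Gamma_add_one hna]
  have g1 := (Real.Gamma_pos_of_pos hα).ne'
  have g2 := (Real.Gamma_pos_of_pos (show (0:ℝ) < (n:ℝ)+1 by positivity)).ne'
  field_simp

lemma vandermonde : ∀ (m : ℕ) {β γ : ℝ}, 0 < β → 0 < γ →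
    ∑ i ∈ range (m+1), cesK β i * cesK γ (m - i) = cesK (β+γ) m := by
  intro m
  induction m with
  | zero => intro β γ hβ hγ; simp [cesK_zero hβ, cesK_zero hγ, cesK_zero (by linarith : (0:ℝ) < β + γ)]
  | succ m ih =>
    intro β γ hβ hγ
    have key : ((m:ℝ)+1) * ∑ i ∈ range (m+1+1), cesK β i * cesK γ (m+1-i)
        = β * ∑ i ∈ range (m+1), cesK (β+1) i * cesK γ (m-i)
          + γ * ∑ i ∈ range (m+1), cesK β i * cesK (γ+1) (m-i) := by
      have expand : ∀ i ∈ range (m+1+1), ((m:ℝ)+1) * (cesK β i * cesK γ (m+1-i))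
          = (i:ℝ) * cesK β i * cesK γ (m+1-i) + cesK β i * (((m+1-i:ℕ):ℝ) * cesK γ (m+1-i)) := by
        intro i hi
        rw [mem_range] at hi
        have hc : ((m+1-i:ℕ):ℝ) = (m:ℝ)+1-(i:ℝ) := by
          have : i ≤ m+1 := by omega
          push_cast [this]; ring
        rw [hc]; ring
      rw [Finset.mul_sum, Finset.sum_congr rfl expand, Finset.sum_add_distrib]
      congr 1
      · rw [Finset.sum_range_succ' (fun i => (i:ℝ) * cesK β i * cesK γ (m+1-i)) (m+1)]
        simp only [Nat.cast_zero, zero_mul, add_zero, zero_add]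
        rw [Finset.mul_sum]
        apply Finset.sum_congr rfl
        intro i hi
        have h := cesK_succ hβ i
        have harg : m+1-(i+1) = m-i := by omega
        rw [harg]
        push_cast
        linear_combination h * cesK γ (m - i)
      · rw [Finset.mul_sum, Finset.sum_range_succ (fun i => cesK β i * (((m+1-i:ℕ):ℝ) * cesK γ (m+1-i))) (m+1)]
        simp only [Nat.sub_self, Nat.cast_zero, zero_mul, mul_zero, add_zero]
        apply Finset.sum_congr rfl
        intro i hi
        rw [mem_range] at hi
        have harg : m+1-i = (m-i)+1 := by omega
        rw [harg]
        have h := cesK_succ hγ (m-i)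
        push_cast
        linear_combination cesK β i * h
    rw [ih (by linarith) hγ, ih hβ (by linarith)] at key
    have h1 : β + 1 + γ = (β+γ)+1 := by ring
    have h2 : β + (γ+1) = (β+γ)+1 := by ring
    rw [h1, h2] at key
    have h3 := cesK_succ (show (0:ℝ) < β + γ by linarith) m
    have hm2 : ((m:ℝ)+1) ≠ 0 := by positivity
    apply mul_left_cancel₀ hm2
    rw [key]
    linear_combination -h3

section WS
variable {β γ : ℝ} {F G : ℕ → ℂ} {N B : ℕ}

lemma ws_eq_range0 (hN : ∀ m, N ≤ m → F m = 0) (β : ℝ) (n : ℕ) :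
    weylSum β F n = ∑ j ∈ range N, (cesK β j : ℂ) * F (j + n) := by
  rw [weylSum, finsum_eq_sum_of_support_subset _ (s := range N) ?_]
  · exact Finset.sum_congr rfl fun j _ => Complex.real_smul
  · intro j hj
    simp only [Function.mem_support, ne_eq] at hj
    by_contra hjB
    simp only [coe_range, Set.mem_Iio, mem_range, not_lt] at hjB
    rw [hN (j+n) (by omega), smul_zero] at hj
    exact hj rfl

lemma ws_bound (hN : ∀ m, N ≤ m → F m = 0) (β : ℝ) : ∀ m, N ≤ m → weylSum β F m = 0 := by
  intro m hm
  rw [ws_eq_range0 hN]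
  exact Finset.sum_eq_zero fun j _ => by rw [hN (j+m) (by omega), mul_zero]

lemma ws_eq_range_abs (hN : ∀ m, N ≤ m → F m = 0) (hB : N ≤ B) (β : ℝ) (m : ℕ) :
    weylSum β F m = ∑ p ∈ range B, if m ≤ p then (cesK β (p - m) : ℂ) * F p else 0 := by
  rw [ws_eq_range0 hN, ← Finset.sum_filter]
  have hfil : (range B).filter (fun p => m ≤ p) = Ico m B := by
    ext p; simp only [mem_filter, mem_range, mem_Ico]; omega
  rw [hfil, Finset.sum_Ico_eq_sum_range]
  have hs : ∀ i ∈ range (B - m), (cesK β (m + i - m) : ℂ) * F (m + i) = (cesK β i : ℂ) * F (i + m) := by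
    intro i _
    rw [show m + i - m = i by omega, show m + i = i + m by omega]
  rw [Finset.sum_congr rfl hs]
  rw [Finset.sum_subset (Finset.range_subset_range.2 (show N ≤ N + B by omega))
    (fun j hj hj2 => by
      rw [mem_range] at hj2
      rw [hN (j+m) (by omega), mul_zero])]
  rw [Finset.sum_subset (Finset.range_subset_range.2 (show B - m ≤ N + B by omega))
    (fun j hj hj2 => by
      rw [mem_range, not_lt] at hj2
      rw [hN (j+m) (by omega), mul_zero])]

lemma finsum_cond_eq_range (X : ℕ → ℂ) (P : ℕ → Prop) [DecidablePred P] (B : ℕ)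
    (hX : ∀ m, B ≤ m → X m = 0) :
    (∑ᶠ (j) (_ : P j), X j) = ∑ j ∈ range B, if P j then X j else 0 := by
  rw [finsum_congr (fun j => finsum_eq_if (p := P j))]
  rw [finsum_eq_sum_of_support_subset]
  intro j hj
  simp only [Function.mem_support, ne_eq] at hj
  simp only [coe_range, Set.mem_Iio]
  by_contra hjB
  rw [hX j (by omega)] at hj
  simp at hj

lemma fdiff_bound {u : ℕ → ℂ} (hN : ∀ m, N ≤ m → u m = 0) : ∀ m, N ≤ m → fdiff u m = 0 := by
  intro m hm; rw [fdiff, hN (m+1) (by omega), hN m hm, sub_zero]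

lemma fdiff_iter_bound {u : ℕ → ℂ} (k : ℕ) (hN : ∀ m, N ≤ m → u m = 0) :
    ∀ m, N ≤ m → fdiff^[k] u m = 0 := by
  induction k generalizing u with
  | zero => exact hN
  | succ k ih =>
    intro m hm
    rw [Function.iterate_succ_apply]
    exact ih (fdiff_bound hN) m hm

lemma ws_sub (hF : ∀ m, N ≤ m → F m = 0) (hG : ∀ m, N ≤ m → G m = 0) (β : ℝ) :
    weylSum β (F - G) = weylSum β F - weylSum β G := by
  funext n
  have hFG : ∀ m, N ≤ m → (F - G) m = 0 := fun m hm => by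
    simp [Pi.sub_apply, hF m hm, hG m hm]
  simp only [Pi.sub_apply, ws_eq_range0 hFG, ws_eq_range0 hF, ws_eq_range0 hG,
    ← Finset.sum_sub_distrib]
  exact Finset.sum_congr rfl fun j _ => mul_sub _ _ _

lemma ws_neg (hF : ∀ m, N ≤ m → F m = 0) (β : ℝ) :
    weylSum β (-F) = - weylSum β F := by
  funext n
  have hFn : ∀ m, N ≤ m → (-F) m = 0 := fun m hm => by simp [hF m hm]
  simp only [ws_eq_range0 hFn, ws_eq_range0 hF, Pi.neg_apply, ← Finset.sum_neg_distrib]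
  exact Finset.sum_congr rfl fun j _ => by simp only [Pi.neg_apply, mul_neg]

lemma fdiff_sub {u v : ℕ → ℂ} : fdiff (u - v) = fdiff u - fdiff v := by
  funext n; simp [fdiff]; ring

lemma fdiff_neg {u : ℕ → ℂ} : fdiff (-u) = - fdiff u := by
  funext n; simp [fdiff]; ring

lemma fdiff_iter_sub {u v : ℕ → ℂ} (k : ℕ) : fdiff^[k] (u - v) = fdiff^[k] u - fdiff^[k] v := by
  induction k generalizing u v with
  | zero => rfl
  | succ k ih => rw [Function.iterate_succ_apply, Function.iterate_succ_apply,
      Function.iterate_succ_apply, fdiff_sub, ih]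

lemma fdiff_iter_neg {u : ℕ → ℂ} (k : ℕ) : fdiff^[k] (-u) = - fdiff^[k] u := by
  induction k generalizing u with
  | zero => rfl
  | succ k ih => rw [Function.iterate_succ_apply, Function.iterate_succ_apply, fdiff_neg, ih]

lemma ws_ws (hβ : 0 < β) (hγ : 0 < γ) (hN : ∀ m, N ≤ m → F m = 0) :
    weylSum β (weylSum γ F) = weylSum (β + γ) F := by
  funext n
  rw [ws_eq_range0 (ws_bound hN γ) β n, ws_eq_range0 hN (β+γ) n]
  have hR : ∀ s ∈ range N, (cesK (β+γ) s : ℂ) * F (s+n)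
      = ∑ i ∈ range (s+1), (cesK β i : ℂ) * (cesK γ (s-i) : ℂ) * F (s+n) := by
    intro s _
    rw [← Finset.sum_mul]
    congr 1
    rw [← vandermonde s hβ hγ]
    push_cast
    rfl
  rw [Finset.sum_congr rfl hR]
  -- triangle to square
  have hpad : ∀ s ∈ range N, ∑ i ∈ range (s+1), (cesK β i : ℂ) * (cesK γ (s-i) : ℂ) * F (s+n)
      = ∑ i ∈ range N, if i ≤ s then (cesK β i : ℂ) * (cesK γ (s-i) : ℂ) * F (s+n) else 0 := by
    intro s hs
    rw [mem_range] at hs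
    rw [← Finset.sum_filter]
    congr 1
    ext i; simp only [mem_filter, mem_range]; omega
  rw [Finset.sum_congr rfl hpad, Finset.sum_comm]
  have hL : ∀ j ∈ range N, (cesK β j : ℂ) * weylSum γ F (j+n)
      = ∑ s ∈ range N, if j ≤ s then (cesK β j : ℂ) * (cesK γ (s-j) : ℂ) * F (s+n) else 0 := by
    intro j _
    rw [ws_eq_range0 hN γ (j+n), Finset.mul_sum, ← Finset.sum_filter]
    have hfil : (range N).filter (fun s => j ≤ s) = Ico j N := by
      ext s; simp only [mem_filter, mem_range, mem_Ico]; omega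
    rw [hfil, Finset.sum_Ico_eq_sum_range]
    have : ∀ i ∈ range (N - j), (cesK β j : ℂ) * (cesK γ (j+i-j) : ℂ) * F (j+i+n)
        = (cesK β j : ℂ) * ((cesK γ i : ℂ) * F (i+(j+n))) := by
      intro i _
      rw [show j+i-j = i by omega, show j+i+n = i+(j+n) by omega]
      ring
    rw [Finset.sum_congr rfl this]
    rw [Finset.sum_subset (Finset.range_subset_range.2 (show N - j ≤ N by omega))
      (fun i hi hi2 => by
        rw [mem_range, not_lt] at hi2
        rw [hN (i+(j+n)) (by omega), mul_zero, mul_zero])]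
  rw [Finset.sum_congr rfl hL]

lemma fdiff_ws_one (hN : ∀ m, N ≤ m → F m = 0) : fdiff (weylSum 1 F) = -F := by
  funext n
  have h1 : ∀ (m : ℕ), weylSum 1 F m = ∑ j ∈ range N, F (j + m) := by
    intro m
    rw [ws_eq_range0 hN 1 m]
    exact Finset.sum_congr rfl fun j _ => by rw [cesK_one]; simp
  rw [fdiff, h1, h1, Pi.neg_apply]
  have e1 : ∑ j ∈ range N, F (j + (n+1)) = ∑ j ∈ range N, F ((j+1) + n) :=
    Finset.sum_congr rfl fun j _ => by rw [show j + (n+1) = (j+1)+n by omega]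
  have e2 : ∑ j ∈ range (N+1), F (j + n) = ∑ j ∈ range N, F ((j+1)+n) + F (0+n) :=
    Finset.sum_range_succ' (fun j => F (j+n)) N
  have e3 : ∑ j ∈ range (N+1), F (j + n) = ∑ j ∈ range N, F (j+n) + F (N+n) :=
    Finset.sum_range_succ (fun j => F (j+n)) N
  rw [e1]
  have := e2.symm.trans e3
  rw [hN (N+n) (by omega)] at this
  simp only [zero_add, add_zero] at this
  -- this : ∑ j ∈ range N, F ((j+1)+n) + F n = ∑ j ∈ range N, F (j+n)
  linear_combination this

lemma fdiff_ws_comm (hN : ∀ m, N ≤ m → F m = 0) (β : ℝ) :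
    fdiff (weylSum β F) = weylSum β (fdiff F) := by
  funext n
  rw [fdiff, ws_eq_range0 hN β (n+1), ws_eq_range0 hN β n,
    ws_eq_range0 (fdiff_bound hN) β n, ← Finset.sum_sub_distrib]
  refine Finset.sum_congr rfl fun j _ => ?_
  rw [fdiff, show j + (n+1) = (j+n)+1 by omega, ← mul_sub]

lemma fdiff_iter_ws (hN : ∀ m, N ≤ m → F m = 0) :
    ∀ k : ℕ, 1 ≤ k → fdiff^[k] (weylSum (k : ℝ) F) = ((-1:ℝ)^k) • F := by
  intro k
  induction k generalizing F with
  | zero => omega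
  | succ k ih =>
    intro _
    rcases Nat.eq_or_lt_of_le (Nat.one_le_iff_ne_zero.2 (Nat.succ_ne_zero k)) with h1 | h1
    · -- k+1 = 1
      have hk : k = 0 := by omega
      subst hk
      rw [Function.iterate_one]
      push_cast
      rw [fdiff_ws_one hN]
      funext n; simp
    · have hk : 1 ≤ k := by omega
      have hcast : ((k:ℝ) + 1) = (((k+1):ℕ):ℝ) := by push_cast; ring
      have hsplit : weylSum (((k+1):ℕ):ℝ) F = weylSum (k:ℝ) (weylSum 1 F) := by
        rw [ws_ws (by exact_mod_cast hk) one_pos hN, ← hcast]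
      rw [hsplit, Function.iterate_succ_apply, fdiff_ws_comm (ws_bound hN 1) (k:ℝ),
        fdiff_ws_one hN, ws_neg hN, fdiff_iter_neg, ih hN hk]
      funext n
      simp only [Pi.neg_apply, Pi.smul_apply, pow_succ, mul_smul]
      simp

lemma weylDiff_ws {α : ℝ} (hα : 0 < α) (hN : ∀ m, N ≤ m → F m = 0) :
    weylDiff α (weylSum α F) = F := by
  rw [weylDiff, if_neg hα.ne']
  set m := ⌊α⌋₊ + 1 with hm
  have hβ : 0 < (⌊α⌋₊ : ℝ) + 1 - α := by
    have := Nat.lt_floor_add_one α; linarith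
  rw [ws_ws hβ hα hN]
  have harg : (⌊α⌋₊ : ℝ) + 1 - α + α = ((m:ℕ):ℝ) := by push_cast [hm]; ring
  rw [harg, fdiff_iter_ws hN m (by omega)]
  funext n
  simp only [Pi.smul_apply, smul_smul, ← pow_add]
  rw [Even.neg_one_pow ⟨m, by ring⟩, one_smul]

lemma ws_inj {α : ℝ} (hα : 0 < α) (hN : ∀ m, N ≤ m → F m = 0)
    (h0 : weylSum α F = 0) : F = 0 := by
  funext n
  have key : ∀ d m, N ≤ m + d → F m = 0 := by
    intro d
    induction d with
    | zero => intro m hm; exact hN m (by omega)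
    | succ d ih =>
      intro m hm
      have htail : ∀ x : ℕ, x ≠ 0 → cesK α x • F (x + m) = 0 := by
        intro x hx
        rw [ih (x+m) (by omega), smul_zero]
      have := congrFun h0 m
      rw [weylSum] at this
      rw [finsum_eq_single _ 0 htail] at this
      rw [cesK_zero hα, zero_add] at this
      simpa using this
  exact key (N + n) n (by omega)

lemma fdiff_inj {u : ℕ → ℂ} (hN : ∀ m, N ≤ m → u m = 0) (h0 : fdiff u = 0) : u = 0 := by
  funext n
  have step : ∀ m, u m = u (m+1) := by
    intro m
    have := congrFun h0 m
    rw [fdiff] at this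
    simp only [Pi.zero_apply] at this
    linear_combination -this
  have key : ∀ d m, u m = u (m + d) := by
    intro d
    induction d with
    | zero => intro m; rfl
    | succ d ih => intro m; rw [step m, show m + (d+1) = (m+1)+d by omega]; exact ih (m+1)
  rw [Pi.zero_apply, key N n, hN (n+N) (by omega)]

lemma fdiff_iter_inj {u : ℕ → ℂ} (k : ℕ) (hN : ∀ m, N ≤ m → u m = 0)
    (h0 : fdiff^[k] u = 0) : u = 0 := by
  induction k generalizing u with
  | zero => exact h0
  | succ k ih =>
    rw [Function.iterate_succ_apply] at h0
    exact fdiff_inj hN (ih (fdiff_bound hN) h0)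

lemma wd_inj {α : ℝ} (hα : 0 < α) (hN : ∀ m, N ≤ m → F m = 0)
    (h0 : weylDiff α F = 0) : F = 0 := by
  rw [weylDiff, if_neg hα.ne'] at h0
  have hβ : 0 < (⌊α⌋₊ : ℝ) + 1 - α := by have := Nat.lt_floor_add_one α; linarith
  have h1 : fdiff^[⌊α⌋₊ + 1] (weylSum ((⌊α⌋₊ : ℝ) + 1 - α) F) = 0 := by
    have hne : ((-1:ℝ) ^ (⌊α⌋₊ + 1)) ≠ 0 := by
      apply pow_ne_zero; norm_num
    funext n
    have := congrFun h0 n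
    simp only [Pi.smul_apply, Pi.zero_apply, smul_eq_zero] at this
    rcases this with h | h
    · exact absurd h hne
    · exact h
  exact ws_inj hβ hN (fdiff_iter_inj _ (ws_bound hN _) h1)

lemma wd_bound {α : ℝ} (hN : ∀ m, N ≤ m → F m = 0) :
    ∀ m, N ≤ m → weylDiff α F m = 0 := by
  intro m hm
  rw [weylDiff]
  split
  · exact hN m hm
  · simp only [Pi.smul_apply]
    rw [fdiff_iter_bound _ (ws_bound hN _) m hm, smul_zero]

lemma wd_sub {α : ℝ} (hF : ∀ m, N ≤ m → F m = 0) (hG : ∀ m, N ≤ m → G m = 0) :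
    weylDiff α (F - G) = weylDiff α F - weylDiff α G := by
  rw [weylDiff, weylDiff, weylDiff]
  split
  · rfl
  · rw [ws_sub hF hG, fdiff_iter_sub, smul_sub]

lemma ws_wd {α : ℝ} (hα : 0 < α) (hN : ∀ m, N ≤ m → F m = 0) :
    weylSum α (weylDiff α F) = F := by
  have hwd : ∀ m, N ≤ m → weylDiff α F m = 0 := wd_bound hN
  have hws : ∀ m, N ≤ m → weylSum α (weylDiff α F) m = 0 := ws_bound hwd α
  have hsubb : ∀ m, N ≤ m → (weylSum α (weylDiff α F) - F) m = 0 := by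
    intro m hm; simp [Pi.sub_apply, hws m hm, hN m hm]
  have h0 : weylDiff α (weylSum α (weylDiff α F) - F) = 0 := by
    rw [wd_sub hws hN, weylDiff_ws hα hwd, sub_self]
  have := wd_inj hα hsubb h0
  funext n
  have := congrFun this n
  simp only [Pi.sub_apply, Pi.zero_apply] at this
  linear_combination this

open scoped Classical in

open scoped Classical in
noncomputable def Phi (k : ℕ → ℂ) (M : ℕ) (P : ℕ → Prop) : ℂ :=
  ∑ u ∈ range (M+1), if P u then k u * k (M - u) else 0

lemma Phi_eq_sum (k : ℕ → ℂ) (M : ℕ) (P : ℕ → Prop) [DecidablePred P] :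
    Phi k M P = ∑ u ∈ (range (M+1)).filter P, k u * k (M - u) := by
  unfold Phi
  rw [Finset.sum_filter]
  refine Finset.sum_congr rfl fun u _ => ?_
  by_cases h : P u
  · rw [if_pos h, if_pos h]
  · rw [if_neg h, if_neg h]

lemma Phi_congr {k : ℕ → ℂ} {M : ℕ} {P Q : ℕ → Prop}
    (h : ∀ u, u ≤ M → (P u ↔ Q u)) : Phi k M P = Phi k M Q := by
  classical
  unfold Phi
  refine Finset.sum_congr rfl fun u hu => ?_
  rw [mem_range] at hu
  have := h u (by omega)
  split_ifs with h1 h2 h2 <;> first | rfl | (exact absurd (this.mp h1) h2) | (exact absurd (this.mpr h2) h1)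

lemma Phi_symm (k : ℕ → ℂ) (M : ℕ) (P : ℕ → Prop) :
    Phi k M P = Phi k M (fun u => P (M - u)) := by
  classical
  unfold Phi
  refine Finset.sum_nbij' (fun u => M - u) (fun u => M - u) ?_ ?_ ?_ ?_ ?_
  · intro u hu; rw [mem_range] at hu ⊢; omega
  · intro u hu; rw [mem_range] at hu ⊢; omega
  · intro u hu; rw [mem_range] at hu; omega
  · intro u hu; rw [mem_range] at hu; omega
  · intro u hu
    rw [mem_range] at hu
    dsimp only
    simp only [show M - (M - u) = u by omega]
    split_ifs with h1
    · ring
    · rfl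

lemma Phi_split (k : ℕ → ℂ) (M : ℕ) (P Q : ℕ → Prop) :
    Phi k M P = Phi k M (fun u => P u ∧ Q u) + Phi k M (fun u => P u ∧ ¬ Q u) := by
  classical
  unfold Phi
  rw [← Finset.sum_add_distrib]
  refine Finset.sum_congr rfl fun u _ => ?_
  by_cases hP : P u <;> by_cases hQ : Q u <;> simp [hP, hQ]

lemma Phi_main {k : ℕ → ℂ} {n p j : ℕ} (hjp : j ≤ p) (hn : n ≤ p + j) :
    Phi k (p+j-n) (fun u => p ≤ u + n ∧ u ≤ p)
      = Phi k (p+j-n) (fun u => j ≤ u + n ∧ p ≤ u + n)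
        - Phi k (p+j-n) (fun u => u + n < j ∧ u + n < p) := by
  set M := p + j - n with hM
  have h1 : Phi k M (fun u => j ≤ u + n ∧ p ≤ u + n)
      = Phi k M (fun u => p ≤ u + n ∧ u ≤ p) + Phi k M (fun u => p < u) := by
    rw [Phi_split k M _ (fun u => u ≤ p)]
    congr 1
    · exact Phi_congr fun u hu => by constructor <;> (intro h; constructor <;> omega)
    · exact Phi_congr fun u hu => by constructor <;> (intro h; omega)
  have h2 : Phi k M (fun u => u + n < j ∧ u + n < p) = Phi k M (fun u => u + n < j) :=
    Phi_congr fun u hu => by constructor <;> (intro h; omega)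
  have h3 : Phi k M (fun u => u + n < j) = Phi k M (fun u => p < u) := by
    rw [Phi_symm k M (fun u => u + n < j)]
    exact Phi_congr fun u hu => by constructor <;> (intro h; omega)
  rw [h1, h2, h3]
  ring

lemma crux (k : ℕ → ℂ) (n p j B : ℕ) (hB : p + j < B) :
    ∑ q ∈ range (n+1), (if n - q ≤ p ∧ q ≤ j then k (p - (n - q)) * k (j - q) else 0)
    = ∑ t ∈ range B, (if n ≤ t then
        k (t - n) * ((if j ≤ t ∧ t - j ≤ p ∧ p ≤ t then k (p+j-t) else 0)
          - (if t < j ∧ t < p then k (p+j-t) else 0)) else 0) := by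
  classical
  rcases le_or_gt n (p+j) with hn | hn
  · -- main case
    set M := p + j - n with hM
    have hC : ∑ q ∈ range (n+1), (if n - q ≤ p ∧ q ≤ j then k (p - (n - q)) * k (j - q) else 0)
        = Phi k M (fun u => p ≤ u + n ∧ u ≤ p) := by
      rw [← Finset.sum_filter, Phi_eq_sum]
      refine Finset.sum_nbij' (fun q => p + q - n) (fun u => u + n - p) ?_ ?_ ?_ ?_ ?_
      · intro q hq; simp only [mem_filter, mem_range] at hq
        simp only [mem_filter, mem_range]; omega
      · intro u hu; simp only [mem_filter, mem_range] at hu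
        simp only [mem_filter, mem_range]; omega
      · intro q hq; simp only [mem_filter, mem_range] at hq; omega
      · intro u hu; simp only [mem_filter, mem_range] at hu; omega
      · intro q hq
        simp only [mem_filter, mem_range] at hq
        rw [show p - (n - q) = p + q - n by omega, show j - q = M - (p + q - n) by omega]
    have hD1 : ∑ t ∈ range B, (if n ≤ t ∧ j ≤ t ∧ t - j ≤ p ∧ p ≤ t then k (t-n) * k (p+j-t) else 0)
        = Phi k M (fun u => j ≤ u + n ∧ p ≤ u + n) := by
      rw [← Finset.sum_filter, Phi_eq_sum]
      refine Finset.sum_nbij' (fun t => t - n) (fun u => u + n) ?_ ?_ ?_ ?_ ?_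
      · intro t ht; simp only [mem_filter, mem_range] at ht
        simp only [mem_filter, mem_range]; omega
      · intro u hu; simp only [mem_filter, mem_range] at hu
        simp only [mem_filter, mem_range]; omega
      · intro t ht; simp only [mem_filter, mem_range] at ht; omega
      · intro u hu; simp only [mem_filter, mem_range] at hu; omega
      · intro t ht
        simp only [mem_filter, mem_range] at ht
        rw [show p + j - t = M - (t - n) by omega]
    have hD2 : ∑ t ∈ range B, (if n ≤ t ∧ t < j ∧ t < p then k (t-n) * k (p+j-t) else 0)
        = Phi k M (fun u => u + n < j ∧ u + n < p) := by
      rw [← Finset.sum_filter, Phi_eq_sum]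
      refine Finset.sum_nbij' (fun t => t - n) (fun u => u + n) ?_ ?_ ?_ ?_ ?_
      · intro t ht; simp only [mem_filter, mem_range] at ht
        simp only [mem_filter, mem_range]; omega
      · intro u hu; simp only [mem_filter, mem_range] at hu
        simp only [mem_filter, mem_range]; omega
      · intro t ht; simp only [mem_filter, mem_range] at ht; omega
      · intro u hu; simp only [mem_filter, mem_range] at hu; omega
      · intro t ht
        simp only [mem_filter, mem_range] at ht
        rw [show p + j - t = M - (t - n) by omega]
    have hRHS : ∑ t ∈ range B, (if n ≤ t then
        k (t - n) * ((if j ≤ t ∧ t - j ≤ p ∧ p ≤ t then k (p+j-t) else 0)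
          - (if t < j ∧ t < p then k (p+j-t) else 0)) else 0)
        = ∑ t ∈ range B, (if n ≤ t ∧ j ≤ t ∧ t - j ≤ p ∧ p ≤ t then k (t-n) * k (p+j-t) else 0)
          - ∑ t ∈ range B, (if n ≤ t ∧ t < j ∧ t < p then k (t-n) * k (p+j-t) else 0) := by
      rw [← Finset.sum_sub_distrib]
      refine Finset.sum_congr rfl fun t _ => ?_
      split_ifs <;> (first | ring1 | (exfalso; omega))
    rw [hC, hRHS, hD1, hD2]
    rcases le_or_gt j p with hjp | hjp
    · exact Phi_main hjp hn
    · -- p < j : use symmetry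
      have hsymm : Phi k M (fun u => p ≤ u + n ∧ u ≤ p) = Phi k M (fun u => j ≤ u + n ∧ u ≤ j) := by
        rw [Phi_symm k M (fun u => p ≤ u + n ∧ u ≤ p)]
        exact Phi_congr fun u hu => by constructor <;> (intro h; constructor <;> omega)
      rw [hsymm]
      have hM' : M = j + p - n := by omega
      have := Phi_main (k := k) (n := n) (p := j) (j := p) (le_of_lt hjp) (by omega)
      rw [← hM'] at this
      rw [this]
      congr 1
      · exact Phi_congr fun u hu => by constructor <;> (intro h; constructor <;> omega)
      · exact Phi_congr fun u hu => by constructor <;> (intro h; constructor <;> omega)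
  · -- n > p + j : both sides zero
    rw [Finset.sum_eq_zero, Finset.sum_eq_zero]
    · intro t ht
      rw [mem_range] at ht
      by_cases h1 : n ≤ t
      · rw [if_pos h1, if_neg (by omega), if_neg (by omega), sub_zero, mul_zero]
      · rw [if_neg h1]
    · intro q hq
      rw [mem_range] at hq
      rw [if_neg (by omega)]

-- axioms for previously proven lemmas

lemma exists_bound {f : ℕ → ℂ} (hf : (Function.support f).Finite) :
    ∃ N, ∀ m, N ≤ m → f m = 0 := by
  refine ⟨hf.toFinset.sup id + 1, fun m hm => ?_⟩
  by_contra h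
  have hmem : m ∈ hf.toFinset := by
    rw [Set.Finite.mem_toFinset]; exact h
  have := Finset.le_sup (f := id) hmem
  simp only [id] at this
  omega

lemma ite_mul_ite0 {c1 c2 : Prop} [Decidable c1] [Decidable c2] (x y u v : ℂ) :
    (if c1 then x * u else 0) * (if c2 then y * v else 0)
      = (if c1 ∧ c2 then x * y else 0) * (u * v) := by
  split_ifs <;> (first | ring1 | tauto)

lemma Hbound {α : ℝ} {F G : ℕ → ℂ} {N : ℕ}
    (hF : ∀ m, N ≤ m → F m = 0) (hG : ∀ m, N ≤ m → G m = 0) :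
    ∀ t, 2*N ≤ t →
      ((∑ j ∈ range (t+1), G j * ∑ p ∈ Icc (t-j) t, (cesK α (p+j-t) : ℂ) * F p)
        - ∑ᶠ (j) (_ : t < j), G j * ∑ᶠ (p) (_ : t < p), (cesK α (p+j-t) : ℂ) * F p) = 0 := by
  intro t ht
  have h1 : (∑ j ∈ range (t+1), G j * ∑ p ∈ Icc (t-j) t, (cesK α (p+j-t) : ℂ) * F p) = 0 := by
    refine Finset.sum_eq_zero fun j hj => ?_
    rw [mem_range] at hj
    by_cases hjN : j < N
    · have : (∑ p ∈ Icc (t-j) t, (cesK α (p+j-t) : ℂ) * F p) = 0 := by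
        refine Finset.sum_eq_zero fun p hp => ?_
        rw [mem_Icc] at hp
        rw [hF p (by omega), mul_zero]
      rw [this, mul_zero]
    · rw [hG j (by omega), zero_mul]
  have h2 : (∑ᶠ (j) (_ : t < j), G j * ∑ᶠ (p) (_ : t < p), (cesK α (p+j-t) : ℂ) * F p) = 0 := by
    have hz : ∀ j : ℕ, (∑ᶠ (_ : t < j), G j * ∑ᶠ (p) (_ : t < p), (cesK α (p+j-t) : ℂ) * F p) = 0 := by
      intro j
      rw [finsum_eq_if]
      split_ifs with hj
      · rw [hG j (by omega), zero_mul]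
      · rfl
    rw [finsum_congr hz, finsum_zero]
  rw [h1, h2, sub_zero]

lemma main0 {α : ℝ} (hα : 0 < α) {F G : ℕ → ℂ} {N : ℕ}
    (hF : ∀ m, N ≤ m → F m = 0) (hG : ∀ m, N ≤ m → G m = 0) (n : ℕ) :
    conv (weylSum α F) (weylSum α G) n
      = weylSum α (fun t => (∑ j ∈ range (t+1), G j * ∑ p ∈ Icc (t-j) t, (cesK α (p+j-t) : ℂ) * F p)
          - ∑ᶠ (j) (_ : t < j), G j * ∑ᶠ (p) (_ : t < p), (cesK α (p+j-t) : ℂ) * F p) n := by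
  classical
  set B := 2*N + n + 1 with hBdef
  set H : ℕ → ℂ := fun t => (∑ j ∈ range (t+1), G j * ∑ p ∈ Icc (t-j) t, (cesK α (p+j-t) : ℂ) * F p)
          - ∑ᶠ (j) (_ : t < j), G j * ∑ᶠ (p) (_ : t < p), (cesK α (p+j-t) : ℂ) * F p with hHdef
  have hHb : ∀ t, 2*N ≤ t → H t = 0 := Hbound hF hG
  -- LHS expansion
  have hLHS : conv (weylSum α F) (weylSum α G) n
      = ∑ p ∈ range B, ∑ j ∈ range B, (∑ q ∈ range (n+1),
          if n - q ≤ p ∧ q ≤ j then (cesK α (p - (n-q)) : ℂ) * (cesK α (j-q) : ℂ) else 0) * (F p * G j) := by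
    have e1 : conv (weylSum α F) (weylSum α G) n
        = ∑ q ∈ range (n+1), (∑ p ∈ range B, if n-q ≤ p then (cesK α (p-(n-q)) : ℂ) * F p else 0)
            * (∑ j ∈ range B, if q ≤ j then (cesK α (j-q) : ℂ) * G j else 0) := by
      unfold conv
      refine Finset.sum_congr rfl fun q hq => ?_
      rw [ws_eq_range_abs (B := B) hF (by omega) α (n-q), ws_eq_range_abs (B := B) hG (by omega) α q]
    rw [e1]
    have e2 : ∀ q ∈ range (n+1),
        (∑ p ∈ range B, if n-q ≤ p then (cesK α (p-(n-q)) : ℂ) * F p else 0)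
          * (∑ j ∈ range B, if q ≤ j then (cesK α (j-q) : ℂ) * G j else 0)
        = ∑ p ∈ range B, ∑ j ∈ range B,
            (if n-q ≤ p ∧ q ≤ j then (cesK α (p-(n-q)) : ℂ) * (cesK α (j-q) : ℂ) else 0) * (F p * G j) := by
      intro q _
      rw [Finset.sum_mul_sum]
      exact Finset.sum_congr rfl fun p _ => Finset.sum_congr rfl fun j _ => ite_mul_ite0 _ _ _ _
    rw [Finset.sum_congr rfl e2, Finset.sum_comm]
    refine Finset.sum_congr rfl fun p _ => ?_
    rw [Finset.sum_comm]
    refine Finset.sum_congr rfl fun j _ => ?_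
    rw [Finset.sum_mul]
  -- RHS expansion
  have hws : weylSum α H n = ∑ t ∈ range B, if n ≤ t then (cesK α (t-n) : ℂ) * H t else 0 :=
    ws_eq_range_abs (B := B) hHb (by omega) α n
  have hHt : ∀ t ∈ range B, (if n ≤ t then (cesK α (t-n) : ℂ) * H t else 0)
      = ∑ j ∈ range B, ∑ p ∈ range B,
          (if n ≤ t then (cesK α (t-n) : ℂ) * ((if j ≤ t ∧ t-j ≤ p ∧ p ≤ t then (cesK α (p+j-t) : ℂ) else 0)
            - (if t < j ∧ t < p then (cesK α (p+j-t) : ℂ) else 0)) else 0) * (F p * G j) := by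
    intro t ht
    rw [mem_range] at ht
    have hpart1 : (∑ j ∈ range (t+1), G j * ∑ p ∈ Icc (t-j) t, (cesK α (p+j-t) : ℂ) * F p)
        = ∑ j ∈ range B, (if j ≤ t then G j * (∑ p ∈ range B, if t-j ≤ p ∧ p ≤ t then (cesK α (p+j-t) : ℂ) * F p else 0) else 0) := by
      have hrng : range (t+1) = (range B).filter (fun j => j ≤ t) := by
        ext j; simp only [mem_range, mem_filter]; omega
      rw [hrng, Finset.sum_filter]
      refine Finset.sum_congr rfl fun j _ => ?_
      by_cases hj : j ≤ t
      · rw [if_pos hj, if_pos hj]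
        have hIcc : Icc (t-j) t = (range B).filter (fun p => t-j ≤ p ∧ p ≤ t) := by
          ext p; simp only [mem_Icc, mem_filter, mem_range]; omega
        rw [hIcc, Finset.sum_filter]
      · rw [if_neg hj, if_neg hj]
    have hpart2 : (∑ᶠ (j) (_ : t < j), G j * ∑ᶠ (p) (_ : t < p), (cesK α (p+j-t) : ℂ) * F p)
        = ∑ j ∈ range B, (if t < j then G j * (∑ p ∈ range B, if t < p then (cesK α (p+j-t) : ℂ) * F p else 0) else 0) := by
      have hinner : ∀ j : ℕ, (∑ᶠ (p) (_ : t < p), (cesK α (p+j-t) : ℂ) * F p)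
          = ∑ p ∈ range B, if t < p then (cesK α (p+j-t) : ℂ) * F p else 0 := fun j =>
        finsum_cond_eq_range _ _ B (fun m hm => by rw [hF m (by omega), mul_zero])
      calc (∑ᶠ (j) (_ : t < j), G j * ∑ᶠ (p) (_ : t < p), (cesK α (p+j-t) : ℂ) * F p)
          = ∑ᶠ (j) (_ : t < j), G j * ∑ p ∈ range B, (if t < p then (cesK α (p+j-t) : ℂ) * F p else 0) :=
            finsum_congr fun j => finsum_congr fun _ => by rw [hinner j]
        _ = ∑ j ∈ range B, (if t < j then G j * (∑ p ∈ range B, if t < p then (cesK α (p+j-t) : ℂ) * F p else 0) else 0) :=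
            finsum_cond_eq_range _ _ B (fun m hm => by rw [hG m (by omega), zero_mul])
    have hS1 : (∑ j ∈ range B, (if j ≤ t then G j * (∑ p ∈ range B, if t-j ≤ p ∧ p ≤ t then (cesK α (p+j-t) : ℂ) * F p else 0) else 0))
        = ∑ j ∈ range B, ∑ p ∈ range B, (if j ≤ t ∧ t-j ≤ p ∧ p ≤ t then (cesK α (p+j-t) : ℂ) else 0) * (F p * G j) := by
      refine Finset.sum_congr rfl fun j _ => ?_
      by_cases hj : j ≤ t
      · rw [if_pos hj, Finset.mul_sum]
        refine Finset.sum_congr rfl fun p _ => ?_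
        split_ifs <;> (first | ring1 | (exfalso; omega))
      · rw [if_neg hj]
        symm
        refine Finset.sum_eq_zero fun p _ => ?_
        rw [if_neg (by omega : ¬(j ≤ t ∧ t-j ≤ p ∧ p ≤ t)), zero_mul]
    have hS2 : (∑ j ∈ range B, (if t < j then G j * (∑ p ∈ range B, if t < p then (cesK α (p+j-t) : ℂ) * F p else 0) else 0))
        = ∑ j ∈ range B, ∑ p ∈ range B, (if t < j ∧ t < p then (cesK α (p+j-t) : ℂ) else 0) * (F p * G j) := by
      refine Finset.sum_congr rfl fun j _ => ?_
      by_cases hj : t < j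
      · rw [if_pos hj, Finset.mul_sum]
        refine Finset.sum_congr rfl fun p _ => ?_
        split_ifs <;> (first | ring1 | (exfalso; omega))
      · rw [if_neg hj]
        symm
        refine Finset.sum_eq_zero fun p _ => ?_
        rw [if_neg (by omega : ¬(t < j ∧ t < p)), zero_mul]
    have hHt2 : H t = ∑ j ∈ range B, ∑ p ∈ range B,
        ((if j ≤ t ∧ t-j ≤ p ∧ p ≤ t then (cesK α (p+j-t) : ℂ) else 0)
          - (if t < j ∧ t < p then (cesK α (p+j-t) : ℂ) else 0)) * (F p * G j) := by
      rw [hHdef]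
      beta_reduce
      rw [hpart1, hpart2, hS1, hS2, ← Finset.sum_sub_distrib]
      refine Finset.sum_congr rfl fun j _ => ?_
      rw [← Finset.sum_sub_distrib]
      refine Finset.sum_congr rfl fun p _ => ?_
      rw [sub_mul]
    rw [hHt2]
    by_cases hn : n ≤ t
    · rw [if_pos hn, Finset.mul_sum]
      refine Finset.sum_congr rfl fun j _ => ?_
      rw [Finset.mul_sum]
      refine Finset.sum_congr rfl fun p _ => ?_
      rw [if_pos hn]
      ring
    · rw [if_neg hn]
      symm
      refine Finset.sum_eq_zero fun j _ => Finset.sum_eq_zero fun p _ => ?_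
      rw [if_neg hn, zero_mul]
  have hR : (∑ t ∈ range B, if n ≤ t then (cesK α (t-n) : ℂ) * H t else 0)
      = ∑ j ∈ range B, ∑ p ∈ range B, ∑ t ∈ range B,
          (if n ≤ t then (cesK α (t-n) : ℂ) * ((if j ≤ t ∧ t-j ≤ p ∧ p ≤ t then (cesK α (p+j-t) : ℂ) else 0)
            - (if t < j ∧ t < p then (cesK α (p+j-t) : ℂ) else 0)) else 0) * (F p * G j) := by
    rw [Finset.sum_congr rfl hHt]
    exact Eq.trans Finset.sum_comm (Finset.sum_congr rfl fun j _ => Finset.sum_comm)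
  rw [hws, hR, hLHS]
  refine Eq.trans Finset.sum_comm ?_
  refine Finset.sum_congr rfl fun j hj => Finset.sum_congr rfl fun p hp => ?_
  rw [mem_range] at hp hj
  rw [← Finset.sum_mul]
  by_cases hpj : p + j < B
  · exact congrArg (fun z => z * (F p * G j)) (crux (fun i => ((cesK α i : ℝ) : ℂ)) n p j B hpj)
  · have h0 : F p * G j = 0 := by
      rcases (by omega : N ≤ p ∨ N ≤ j) with h | h
      · rw [hF p h, zero_mul]
      · rw [hG j h, mul_zero]
    rw [h0, mul_zero, mul_zero]


theorem stmt7 (f g : ℕ → ℂ) (hf : (Function.support f).Finite)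
    (hg : (Function.support g).Finite) (α : ℝ) (hα : 0 ≤ α) (n : ℕ) :
    weylDiff α (conv f g) n =
      (∑ j ∈ Finset.range (n + 1), weylDiff α g j *
          ∑ p ∈ Finset.Icc (n - j) n, (cesK0 α (p + j - n) : ℂ) * weylDiff α f p) -
        ∑ᶠ (j : ℕ) (_ : n < j), weylDiff α g j *
          ∑ᶠ (p : ℕ) (_ : n < p), (cesK0 α (p + j - n) : ℂ) * weylDiff α f p := by
  classical
  rcases eq_or_lt_of_le hα with h0 | hpos
  · -- α = 0
    have hz : α = 0 := h0.symm
    subst hz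
    have hwd : ∀ u : ℕ → ℂ, weylDiff 0 u = u := fun u => by rw [weylDiff, if_pos rfl]
    rw [hwd]
    have hB0 : (∑ᶠ (j : ℕ) (_ : n < j), weylDiff 0 g j *
        ∑ᶠ (p : ℕ) (_ : n < p), (cesK0 0 (p + j - n) : ℂ) * weylDiff 0 f p) = 0 := by
      have hz : ∀ j : ℕ, (∑ᶠ (_ : n < j), weylDiff 0 g j *
          ∑ᶠ (p : ℕ) (_ : n < p), (cesK0 0 (p + j - n) : ℂ) * weylDiff 0 f p) = 0 := by
        intro j
        rw [finsum_eq_if]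
        split_ifs with hj
        · have hin : ∀ p : ℕ, (∑ᶠ (_ : n < p), (cesK0 0 (p + j - n) : ℂ) * weylDiff 0 f p) = 0 := by
            intro p
            rw [finsum_eq_if]
            split_ifs with hp
            · rw [cesK0, if_pos rfl, if_neg (by omega : ¬ p + j - n = 0)]
              simp
            · rfl
          rw [finsum_congr hin, finsum_zero, mul_zero]
        · rfl
      rw [finsum_congr hz, finsum_zero]
    rw [hB0, sub_zero]
    have hA : ∀ j ∈ Finset.range (n+1),
        weylDiff 0 g j * (∑ p ∈ Finset.Icc (n - j) n, (cesK0 0 (p + j - n) : ℂ) * weylDiff 0 f p)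
          = g j * f (n - j) := by
      intro j hj
      rw [mem_range] at hj
      rw [hwd, hwd]
      congr 1
      rw [Finset.sum_eq_single (n - j)]
      · rw [show (n - j) + j - n = 0 from by omega, cesK0, if_pos rfl, if_pos rfl]
        simp
      · intro p hp hne
        rw [mem_Icc] at hp
        rw [cesK0, if_pos rfl, if_neg (by omega : ¬ p + j - n = 0)]
        simp
      · intro hmem
        exfalso
        exact hmem (by rw [mem_Icc]; omega)
    rw [Finset.sum_congr rfl hA]
    unfold conv
    exact Finset.sum_congr rfl fun j _ => mul_comm _ _
  · -- α > 0
    obtain ⟨Nf, hNf⟩ := exists_bound hf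
    obtain ⟨Ng, hNg⟩ := exists_bound hg
    have hfb : ∀ m, max Nf Ng ≤ m → f m = 0 := fun m hm => hNf m (by omega)
    have hgb : ∀ m, max Nf Ng ≤ m → g m = 0 := fun m hm => hNg m (by omega)
    have hFb : ∀ m, max Nf Ng ≤ m → weylDiff α f m = 0 := wd_bound hfb
    have hGb : ∀ m, max Nf Ng ≤ m → weylDiff α g m = 0 := wd_bound hgb
    have hfF : weylSum α (weylDiff α f) = f := ws_wd hpos hfb
    have hgG : weylSum α (weylDiff α g) = g := ws_wd hpos hgb
    have hconv : conv f g = weylSum α (fun t =>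
        (∑ j ∈ range (t+1), weylDiff α g j * ∑ p ∈ Icc (t-j) t, (cesK α (p+j-t) : ℂ) * weylDiff α f p)
          - ∑ᶠ (j) (_ : t < j), weylDiff α g j * ∑ᶠ (p) (_ : t < p), (cesK α (p+j-t) : ℂ) * weylDiff α f p) := by
      conv_lhs => rw [← hfF, ← hgG]
      exact funext fun t => main0 hpos hFb hGb t
    rw [hconv, weylDiff_ws hpos (N := 2 * max Nf Ng) (Hbound hFb hGb)]
    have hkC : ∀ x : ℕ, ((cesK0 α x : ℝ) : ℂ) = ((cesK α x : ℝ) : ℂ) := fun x => by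
      rw [cesK0, if_neg hpos.ne']
    beta_reduce
    congr 1
    · refine Finset.sum_congr rfl fun j _ => ?_
      refine congrArg (fun z => weylDiff α g j * z) ?_
      refine Finset.sum_congr rfl fun p _ => ?_
      rw [hkC]
    · refine finsum_congr fun j => finsum_congr fun _ => ?_
      refine congrArg (fun z => weylDiff α g j * z) ?_
      refine finsum_congr fun p => finsum_congr fun _ => ?_
      rw [hkC]
end WS
end
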